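/- If X and Y are commuting Hermitian positive semi-definite matrices, then X∨Y = (X + Y + |X−Y|)/2, where |M| denotes (M*M)^{1/2}; consequently ‖X∨Y‖ = max{‖X‖, ‖Y‖}. -/

import Mathlib

open scoped Matrix Matrix.Norms.L2Operator ComplexOrder

/-- The square root of a positive semi-definite matrix, as `Matrix.PosSemidef.sqrt` was defined
in Mathlib (December 2024); it was removed since. -/
noncomputable def Matrix.PosSemidef.sqrt {n 𝕜 : Type*} [Fintype n] [RCLike 𝕜] [DecidableEq n]
    {A : Matrix n n 𝕜} (hA : A.PosSemidef) : Matrix n n 𝕜 :=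
  hA.1.eigenvectorUnitary.1 * Matrix.diagonal ((↑) ∘ (√·) ∘ hA.1.eigenvalues) *
    (star hA.1.eigenvectorUnitary : Matrix n n 𝕜)

/-- `MPInv A B` means `B` is the Moore-Penrose inverse of `A`. -/
def MPInv {n : ℕ} (A B : Matrix (Fin n) (Fin n) ℂ) : Prop :=
  A * B * A = A ∧ B * A * B = B ∧ (A * B).IsHermitian ∧ (B * A).IsHermitian

namespace SupOfCommuteAux

open Matrix

variable {n : ℕ}

noncomputable def fc {H : Matrix (Fin n) (Fin n) ℂ} (hH : H.IsHermitian) (f : ℝ → ℝ) :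
    Matrix (Fin n) (Fin n) ℂ :=
  (hH.eigenvectorUnitary : Matrix (Fin n) (Fin n) ℂ) *
    Matrix.diagonal (fun i => (f (hH.eigenvalues i) : ℂ)) *
    star (hH.eigenvectorUnitary : Matrix (Fin n) (Fin n) ℂ)

private lemma conj_mul_conj (U : Matrix (Fin n) (Fin n) ℂ) (h2 : star U * U = 1)
    (A B : Matrix (Fin n) (Fin n) ℂ) :
    (U * A * star U) * (U * B * star U) = U * (A * B) * star U := by
  have cancel : ∀ M : Matrix (Fin n) (Fin n) ℂ, star U * (U * M) = M := fun M => by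
    rw [← Matrix.mul_assoc, h2, Matrix.one_mul]
  simp only [Matrix.mul_assoc, cancel]

variable {H : Matrix (Fin n) (Fin n) ℂ} (hH : H.IsHermitian)

lemma fc_mul (f g : ℝ → ℝ) : fc hH f * fc hH g = fc hH (fun t => f t * g t) := by
  unfold fc
  rw [conj_mul_conj _ (Unitary.coe_star_mul_self _), Matrix.diagonal_mul_diagonal]
  have : (fun i => (f (hH.eigenvalues i) : ℂ) * (g (hH.eigenvalues i) : ℂ))
      = (fun i => (((fun t => f t * g t) (hH.eigenvalues i) : ℝ) : ℂ)) := by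
    funext i; push_cast; ring
  rw [this]

lemma fc_congr {f g : ℝ → ℝ} (h : ∀ i, f (hH.eigenvalues i) = g (hH.eigenvalues i)) :
    fc hH f = fc hH g := by
  unfold fc
  have : (fun i => ((f (hH.eigenvalues i) : ℝ) : ℂ))
      = (fun i => ((g (hH.eigenvalues i) : ℝ) : ℂ)) := by
    funext i; rw [h i]
  rw [this]

lemma fc_id : fc hH (fun t => t) = H := by
  conv_rhs => rw [hH.spectral_theorem]
  rfl

lemma fc_herm (f : ℝ → ℝ) : (fc hH f).IsHermitian := by
  have hD : (Matrix.diagonal (fun i => (f (hH.eigenvalues i) : ℂ))).IsHermitian := by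
    exact Matrix.isHermitian_diagonal_iff.mpr fun i => Complex.conj_ofReal _
  unfold fc
  rw [Matrix.star_eq_conjTranspose]
  exact Matrix.isHermitian_mul_mul_conjTranspose _ hD

lemma fc_psd {f : ℝ → ℝ} (h : ∀ i, 0 ≤ f (hH.eigenvalues i)) : (fc hH f).PosSemidef := by
  unfold fc
  rw [Matrix.star_eq_conjTranspose]
  refine Matrix.PosSemidef.mul_mul_conjTranspose_same (Matrix.PosSemidef.diagonal ?_) _
  intro i
  simp only [Pi.zero_apply]
  exact_mod_cast h i

lemma fc_add (f g : ℝ → ℝ) : fc hH f + fc hH g = fc hH (fun t => f t + g t) := by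
  unfold fc
  rw [← Matrix.add_mul, ← Matrix.mul_add, Matrix.diagonal_add]
  congr 2
  ext i
  push_cast
  ring

lemma fc_neg (f : ℝ → ℝ) : -fc hH f = fc hH (fun t => -(f t)) := by
  unfold fc
  rw [← Matrix.neg_mul, ← Matrix.mul_neg, Matrix.diagonal_neg]
  congr 2
  ext i
  push_cast
  ring

lemma fc_sub (f g : ℝ → ℝ) : fc hH f - fc hH g = fc hH (fun t => f t - g t) := by
  rw [sub_eq_add_neg, fc_neg, fc_add]
  congr 1

lemma fc_const (c : ℝ) : fc hH (fun _ => c) = (c : ℂ) • 1 := by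
  unfold fc
  have h1 : (hH.eigenvectorUnitary : Matrix (Fin n) (Fin n) ℂ) *
      star (hH.eigenvectorUnitary : Matrix (Fin n) (Fin n) ℂ) = 1 := Unitary.coe_mul_star_self _
  have : Matrix.diagonal (fun _ : Fin n => (c : ℂ)) = (c : ℂ) • 1 := by
    rw [Matrix.smul_one_eq_diagonal]
  rw [this, Matrix.mul_smul, Matrix.mul_one, Matrix.smul_mul, h1]

lemma fc_one : fc hH (fun _ => 1) = 1 := by
  rw [fc_const]
  simp

lemma fc_commute (f : ℝ → ℝ) {B : Matrix (Fin n) (Fin n) ℂ} (hB : B * H = H * B) :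
    B * fc hH f = fc hH f * B := by
  set U : Matrix (Fin n) (Fin n) ℂ := (hH.eigenvectorUnitary : Matrix (Fin n) (Fin n) ℂ) with hU
  have h1 : U * star U = 1 := Unitary.coe_mul_star_self _
  have h2 : star U * U = 1 := Unitary.coe_star_mul_self _
  have hspec : H = U * Matrix.diagonal (fun i => (hH.eigenvalues i : ℂ)) * star U :=
    hH.spectral_theorem
  have hUD : H * U = U * Matrix.diagonal (fun i => (hH.eigenvalues i : ℂ)) := by
    conv_lhs => rw [hspec]
    rw [Matrix.mul_assoc, h2, Matrix.mul_one]
  have hDU : star U * H = Matrix.diagonal (fun i => (hH.eigenvalues i : ℂ)) * star U := by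
    conv_lhs => rw [hspec]
    rw [← Matrix.mul_assoc, ← Matrix.mul_assoc, h2, Matrix.one_mul]
  set B' : Matrix (Fin n) (Fin n) ℂ := star U * B * U with hB'
  have hcomm' : B' * Matrix.diagonal (fun i => (hH.eigenvalues i : ℂ))
      = Matrix.diagonal (fun i => (hH.eigenvalues i : ℂ)) * B' := by
    calc B' * Matrix.diagonal (fun i => (hH.eigenvalues i : ℂ))
        = star U * B * (U * Matrix.diagonal (fun i => (hH.eigenvalues i : ℂ))) := by
          rw [hB', Matrix.mul_assoc]
    _ = star U * B * (H * U) := by rw [hUD]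
    _ = star U * (B * H) * U := by simp only [Matrix.mul_assoc]
    _ = star U * (H * B) * U := by rw [hB]
    _ = (star U * H) * (B * U) := by simp only [Matrix.mul_assoc]
    _ = Matrix.diagonal (fun i => (hH.eigenvalues i : ℂ)) * star U * (B * U) := by rw [hDU]
    _ = Matrix.diagonal (fun i => (hH.eigenvalues i : ℂ)) * B' := by
          rw [hB']; simp only [Matrix.mul_assoc]
  have key : ∀ i j, B' i j * (hH.eigenvalues j : ℂ) = (hH.eigenvalues i : ℂ) * B' i j := by
    intro i j
    have h3 := congrFun (congrFun hcomm' i) j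
    rwa [Matrix.mul_diagonal, Matrix.diagonal_mul] at h3
  have hcommf : B' * Matrix.diagonal (fun i => (f (hH.eigenvalues i) : ℂ))
      = Matrix.diagonal (fun i => (f (hH.eigenvalues i) : ℂ)) * B' := by
    ext i j
    rw [Matrix.mul_diagonal, Matrix.diagonal_mul]
    rcases eq_or_ne (B' i j) 0 with h | h
    · simp [h]
    · have heig : (hH.eigenvalues j : ℂ) = (hH.eigenvalues i : ℂ) := by
        have k := key i j
        rw [mul_comm ((hH.eigenvalues i : ℂ))] at k
        exact mul_left_cancel₀ h k
      have heig' : hH.eigenvalues j = hH.eigenvalues i := by exact_mod_cast heig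
      rw [heig', mul_comm]
  have hBrec : B = U * B' * star U := by
    rw [hB', ← Matrix.mul_assoc, ← Matrix.mul_assoc, h1, Matrix.one_mul, Matrix.mul_assoc, h1,
      Matrix.mul_one]
  have hfc : fc hH f = U * Matrix.diagonal (fun i => (f (hH.eigenvalues i) : ℂ)) * star U := rfl
  rw [hfc, hBrec, conj_mul_conj _ h2, conj_mul_conj _ h2, hcommf]

lemma _root_.Matrix.PosSemidef.sqrt_eq_fc {A : Matrix (Fin n) (Fin n) ℂ} (hA : A.PosSemidef) :
    hA.sqrt = fc hA.1 Real.sqrt := rfl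

lemma _root_.Matrix.PosSemidef.posSemidef_sqrt {A : Matrix (Fin n) (Fin n) ℂ}
    (hA : A.PosSemidef) : hA.sqrt.PosSemidef := by
  rw [hA.sqrt_eq_fc]; exact fc_psd _ fun i => Real.sqrt_nonneg _

lemma _root_.Matrix.PosSemidef.sqrt_mul_self {A : Matrix (Fin n) (Fin n) ℂ}
    (hA : A.PosSemidef) : hA.sqrt * hA.sqrt = A := by
  rw [hA.sqrt_eq_fc, fc_mul]
  calc _ = fc hA.1 (fun t => t) :=
        fc_congr _ fun i => Real.mul_self_sqrt (hA.eigenvalues_nonneg i)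
  _ = A := fc_id _

open scoped MatrixOrder Matrix.Norms.L2Operator in
lemma _root_.Matrix.PosSemidef.eq_of_sq_eq_sq {A B : Matrix (Fin n) (Fin n) ℂ}
    (hA : A.PosSemidef) (hB : B.PosSemidef) (h : A ^ 2 = B ^ 2) : A = B := by
  rw [← CFC.sqrt_sq A hA.nonneg, h, CFC.sqrt_sq B hB.nonneg]

lemma _root_.Matrix.PosSemidef.eq_sqrt_of_sq_eq {A : Matrix (Fin n) (Fin n) ℂ}
    (hA : A.PosSemidef) {B : Matrix (Fin n) (Fin n) ℂ} (hB : B.PosSemidef) (h : A ^ 2 = B) :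
    A = hB.sqrt :=
  hA.eq_of_sq_eq_sq hB.posSemidef_sqrt (by rw [h, pow_two, hB.sqrt_mul_self])


section Helpers

variable {n : ℕ}

lemma psd_smul {M : Matrix (Fin n) (Fin n) ℂ} (hM : M.PosSemidef) {c : ℝ} (hc : 0 ≤ c) :
    ((c : ℂ) • M).PosSemidef := by
  refine Matrix.PosSemidef.of_dotProduct_mulVec_nonneg ?_ ?_
  · show ((c : ℂ) • M)ᴴ = (c : ℂ) • M
    rw [Matrix.conjTranspose_smul, hM.1]
    congr 1
    exact Complex.conj_ofReal _
  · intro x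
    rw [Matrix.smul_mulVec, dotProduct_smul, smul_eq_mul]
    exact mul_nonneg (by exact_mod_cast hc) (hM.dotProduct_mulVec_nonneg x)

lemma psd_eq_zero {M : Matrix (Fin n) (Fin n) ℂ} (hM : M.PosSemidef) (hM' : (-M).PosSemidef) :
    M = 0 := by
  have hvec : ∀ x : Fin n → ℂ, M *ᵥ x = 0 := by
    intro x
    rw [← hM.dotProduct_mulVec_zero_iff]
    refine le_antisymm ?_ (hM.dotProduct_mulVec_nonneg x)
    have h := hM'.dotProduct_mulVec_nonneg x
    rw [Matrix.neg_mulVec, dotProduct_neg] at h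
    exact neg_nonneg.mp h
  ext i j
  have h := congrFun (hvec (Pi.single j 1)) i
  simpa [Matrix.mulVec_single] using h

lemma mpinv_unique {A B C : Matrix (Fin n) (Fin n) ℂ} (hB : MPInv A B) (hC : MPInv A C) :
    B = C := by
  obtain ⟨hB1, hB2, hB3, hB4⟩ := hB
  obtain ⟨hC1, hC2, hC3, hC4⟩ := hC
  have hAB : A * B = A * C := by
    calc A * B = (A * C * A) * B := by rw [hC1]
    _ = (A * C) * (A * B) := by simp only [Matrix.mul_assoc]
    _ = (A * C)ᴴ * (A * B)ᴴ := by rw [hC3, hB3]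
    _ = Cᴴ * (A * B * A)ᴴ := by simp only [Matrix.conjTranspose_mul, Matrix.mul_assoc]
    _ = Cᴴ * Aᴴ := by rw [hB1]
    _ = (A * C)ᴴ := (Matrix.conjTranspose_mul _ _).symm
    _ = A * C := hC3
  have hBA : B * A = C * A := by
    calc B * A = B * (A * C * A) := by rw [hC1]
    _ = (B * A) * (C * A) := by simp only [Matrix.mul_assoc]
    _ = (B * A)ᴴ * (C * A)ᴴ := by rw [hB4, hC4]
    _ = (A * B * A)ᴴ * Cᴴ := by simp only [Matrix.conjTranspose_mul, Matrix.mul_assoc]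
    _ = Aᴴ * Cᴴ := by rw [hB1]
    _ = (C * A)ᴴ := (Matrix.conjTranspose_mul _ _).symm
    _ = C * A := hC4
  calc B = B * A * B := hB2.symm
  _ = B * (A * C) := by rw [Matrix.mul_assoc, hAB]
  _ = (B * A) * C := by rw [Matrix.mul_assoc]
  _ = C * A * C := by rw [hBA]
  _ = C := hC2

lemma herm_dot {M : Matrix (Fin n) (Fin n) ℂ} (hM : M.IsHermitian) (x y : Fin n → ℂ) :
    dotProduct (star x) (M *ᵥ y) = dotProduct (star (M *ᵥ x)) y := by
  rw [Matrix.dotProduct_mulVec, Matrix.star_mulVec, hM]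

lemma norm_sq_eq (y : Fin n → ℂ) :
    ‖(WithLp.equiv 2 (Fin n → ℂ)).symm y‖ ^ 2 = (dotProduct (star y) y).re := by
  rw [← inner_self_eq_norm_sq (𝕜 := ℂ), EuclideanSpace.inner_eq_star_dotProduct,
    dotProduct_comm]
  rfl

lemma mulVec_bound (N : Matrix (Fin n) (Fin n) ℂ) (x : Fin n → ℂ) :
    ‖(WithLp.equiv 2 (Fin n → ℂ)).symm (N *ᵥ x)‖
      ≤ ‖N‖ * ‖(WithLp.equiv 2 (Fin n → ℂ)).symm x‖ :=
  Matrix.l2_opNorm_mulVec N ((WithLp.equiv 2 (Fin n → ℂ)).symm x)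

lemma norm_le_of_form {M : Matrix (Fin n) (Fin n) ℂ} (hM : M.PosSemidef) {c : ℝ} (hc : 0 ≤ c)
    (h : ∀ x : Fin n → ℂ, (dotProduct (star x) (M *ᵥ x)).re
        ≤ c * (dotProduct (star x) x).re) :
    ‖M‖ ≤ c := by
  have hTps := hM.posSemidef_sqrt
  have hTT : hM.sqrt * hM.sqrt = M := hM.sqrt_mul_self
  have hTnorm : ‖hM.sqrt‖ ≤ Real.sqrt c := by
    rw [Matrix.l2_opNorm_def]
    refine ContinuousLinearMap.opNorm_le_bound _ (Real.sqrt_nonneg c) fun x => ?_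
    set y : Fin n → ℂ := (WithLp.equiv 2 (Fin n → ℂ)) x with hy
    have hxy : x = (WithLp.equiv 2 (Fin n → ℂ)).symm y := (Equiv.symm_apply_apply _ _).symm
    have happ : ((Matrix.toEuclideanLin.trans LinearMap.toContinuousLinearMap) hM.sqrt) x
        = (WithLp.equiv 2 (Fin n → ℂ)).symm (hM.sqrt *ᵥ y) := rfl
    rw [happ]
    have h1 : ‖(WithLp.equiv 2 (Fin n → ℂ)).symm (hM.sqrt *ᵥ y)‖ ^ 2
        = (dotProduct (star (hM.sqrt *ᵥ y)) (hM.sqrt *ᵥ y)).re := norm_sq_eq _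
    have h2 : dotProduct (star (hM.sqrt *ᵥ y)) (hM.sqrt *ᵥ y)
        = dotProduct (star y) (M *ᵥ y) := by
      rw [← herm_dot hTps.1, Matrix.mulVec_mulVec, hTT]
    have h3 : ‖x‖ ^ 2 = (dotProduct (star y) y).re := by
      rw [hxy]; exact norm_sq_eq y
    have hb : ‖(WithLp.equiv 2 (Fin n → ℂ)).symm (hM.sqrt *ᵥ y)‖ ^ 2 ≤ c * ‖x‖ ^ 2 := by
      rw [h1, h2, h3]; exact h y
    calc ‖(WithLp.equiv 2 (Fin n → ℂ)).symm (hM.sqrt *ᵥ y)‖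
        = Real.sqrt (‖(WithLp.equiv 2 (Fin n → ℂ)).symm (hM.sqrt *ᵥ y)‖ ^ 2) :=
          (Real.sqrt_sq (norm_nonneg _)).symm
    _ ≤ Real.sqrt (c * ‖x‖ ^ 2) := Real.sqrt_le_sqrt hb
    _ = Real.sqrt c * ‖x‖ := by
          rw [Real.sqrt_mul hc, Real.sqrt_sq (norm_nonneg _)]
  calc ‖M‖ = ‖hM.sqrtᴴ * hM.sqrt‖ := by rw [hTps.1, hTT]
  _ = ‖hM.sqrt‖ * ‖hM.sqrt‖ := Matrix.l2_opNorm_conjTranspose_mul_self _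
  _ ≤ Real.sqrt c * Real.sqrt c :=
        mul_le_mul hTnorm hTnorm (norm_nonneg _) (Real.sqrt_nonneg c)
  _ = c := Real.mul_self_sqrt hc

lemma norm_mono {M N : Matrix (Fin n) (Fin n) ℂ} (hM : M.PosSemidef) (hN : N.PosSemidef)
    (h : (N - M).PosSemidef) : ‖M‖ ≤ ‖N‖ := by
  refine norm_le_of_form hM (norm_nonneg N) fun x => ?_
  have h1 : (dotProduct (star x) (M *ᵥ x)).re
      ≤ (dotProduct (star x) (N *ᵥ x)).re := by
    have h0 := h.dotProduct_mulVec_nonneg x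
    rw [Matrix.sub_mulVec, dotProduct_sub] at h0
    have h0' : 0 ≤ (dotProduct (star x) (N *ᵥ x)
        - dotProduct (star x) (M *ᵥ x)).re := by
      exact_mod_cast (Complex.le_def.mp h0).1
    rw [Complex.sub_re] at h0'
    linarith
  refine h1.trans ?_
  have hinner : dotProduct (star x) (N *ᵥ x)
      = (inner ℂ ((WithLp.equiv 2 (Fin n → ℂ)).symm x)
          ((WithLp.equiv 2 (Fin n → ℂ)).symm (N *ᵥ x)) : ℂ) := by
    rw [EuclideanSpace.inner_eq_star_dotProduct]
    rw [dotProduct_comm]; rfl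
  rw [hinner]
  calc (inner ℂ ((WithLp.equiv 2 (Fin n → ℂ)).symm x)
          ((WithLp.equiv 2 (Fin n → ℂ)).symm (N *ᵥ x)) : ℂ).re
      ≤ ‖(inner ℂ ((WithLp.equiv 2 (Fin n → ℂ)).symm x)
          ((WithLp.equiv 2 (Fin n → ℂ)).symm (N *ᵥ x)) : ℂ)‖ := Complex.re_le_norm _
  _ = ‖(inner ℂ ((WithLp.equiv 2 (Fin n → ℂ)).symm x)
          ((WithLp.equiv 2 (Fin n → ℂ)).symm (N *ᵥ x)) : ℂ)‖ := rfl
  _ ≤ ‖(WithLp.equiv 2 (Fin n → ℂ)).symm x‖ * ‖(WithLp.equiv 2 (Fin n → ℂ)).symm (N *ᵥ x)‖ :=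
        norm_inner_le_norm _ _
  _ ≤ ‖(WithLp.equiv 2 (Fin n → ℂ)).symm x‖
        * (‖N‖ * ‖(WithLp.equiv 2 (Fin n → ℂ)).symm x‖) := by
        have := mulVec_bound N x
        exact mul_le_mul_of_nonneg_left this (norm_nonneg _)
  _ = ‖N‖ * ‖(WithLp.equiv 2 (Fin n → ℂ)).symm x‖ ^ 2 := by ring
  _ = ‖N‖ * (dotProduct (star x) x).re := by rw [norm_sq_eq]

lemma eig_le_norm {H : Matrix (Fin n) (Fin n) ℂ} (hH : H.IsHermitian) (i : Fin n) :
    hH.eigenvalues i ≤ ‖H‖ := by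
  have hv := hH.mulVec_eigenvectorBasis i
  have hnorm1 : ‖hH.eigenvectorBasis i‖ = 1 := hH.eigenvectorBasis.orthonormal.1 i
  have hb := mulVec_bound H ((WithLp.equiv 2 (Fin n → ℂ)) (hH.eigenvectorBasis i))
  change ‖(WithLp.equiv 2 (Fin n → ℂ)).symm (H *ᵥ (hH.eigenvectorBasis i).ofLp)‖
    ≤ ‖H‖ * ‖hH.eigenvectorBasis i‖ at hb
  rw [hv] at hb
  have hsm : (WithLp.equiv 2 (Fin n → ℂ)).symm
      (hH.eigenvalues i • (hH.eigenvectorBasis i).ofLp)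
      = hH.eigenvalues i • hH.eigenvectorBasis i := by
    rfl
  rw [hsm, hnorm1, mul_one, norm_smul, hnorm1, mul_one, Real.norm_eq_abs] at hb
  exact (le_abs_self _).trans hb

end Helpers

end SupOfCommuteAux
/-- For commuting PSD matrices, X∨Y = (X + Y + |X - Y|)/2 and ‖X∨Y‖ = max ‖X‖ ‖Y‖. -/
theorem sup_of_commute {n : ℕ} (X Y Sd Sdh Wh : Matrix (Fin n) (Fin n) ℂ)
    (hX : X.PosSemidef) (hY : Y.PosSemidef) (hcomm : X * Y = Y * X)
    (hSd : MPInv (X + Y) Sd)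
    (hSdh : Sdh.PosSemidef) (hSdh2 : Sdh * Sdh = Sd)
    (hWh : Wh.PosSemidef)
    (hWh2 : Wh * Wh = Sdh * ((4 : ℂ)⁻¹ • (X + Y) - X * Sd * Y) * Sdh) :
    (2 : ℂ)⁻¹ • (X + Y) + (hX.add hY).sqrt * Wh * (hX.add hY).sqrt
      = (2 : ℂ)⁻¹ • (X + Y + (Matrix.posSemidef_conjTranspose_mul_self (X - Y)).sqrt) ∧
    ‖(2 : ℂ)⁻¹ • (X + Y) + (hX.add hY).sqrt * Wh * (hX.add hY).sqrt‖
      = max ‖X‖ ‖Y‖ := by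
  classical
  open SupOfCommuteAux Matrix in
  -- abbreviations
  have hS : (X + Y).PosSemidef := hX.add hY
  have hS1 : (X + Y).IsHermitian := hS.1
  have hnn : ∀ i, (0 : ℝ) ≤ hS1.eigenvalues i := fun i => hS.eigenvalues_nonneg i
  set A : Matrix (Fin n) (Fin n) ℂ := (Matrix.posSemidef_conjTranspose_mul_self (X - Y)).sqrt
    with hAdef
  have hApsd : A.PosSemidef := (Matrix.posSemidef_conjTranspose_mul_self (X - Y)).posSemidef_sqrt
  have hH'herm : (X - Y).IsHermitian := hX.1.sub hY.1
  -- commutation sources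
  have hXS : X * (X + Y) = (X + Y) * X := by rw [mul_add, add_mul, hcomm]
  have hYS : Y * (X + Y) = (X + Y) * Y := by rw [mul_add, add_mul, hcomm]
  have hH'S : (X - Y) * (X + Y) = (X + Y) * (X - Y) := by
    simp only [sub_mul, mul_add, add_mul, mul_sub]
    rw [hcomm]
    abel
  have hXH' : X * (X - Y) = (X - Y) * X := by rw [mul_sub, sub_mul, hcomm]
  have hYH' : Y * (X - Y) = (X - Y) * Y := by rw [mul_sub, sub_mul, hcomm]
  -- Sd is the fc of the inverse function
  have hSd_eq : Sd = fc hS1 (fun t => t⁻¹) := by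
    refine mpinv_unique hSd ⟨?_, ?_, ?_, ?_⟩
    · calc (X + Y) * fc hS1 (fun t => t⁻¹) * (X + Y)
          = fc hS1 (fun t => t) * fc hS1 (fun t => t⁻¹) * fc hS1 (fun t => t) := by
            rw [fc_id]
      _ = fc hS1 (fun t => t * t⁻¹) * fc hS1 (fun t => t) := by rw [fc_mul]
      _ = fc hS1 (fun t => t * t⁻¹ * t) := by rw [fc_mul]
      _ = fc hS1 (fun t => t) := fc_congr _ fun i => by
            rcases eq_or_ne (hS1.eigenvalues i) 0 with h | h
            · simp [h]
            · field_simp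
      _ = X + Y := fc_id _
    · calc fc hS1 (fun t => t⁻¹) * (X + Y) * fc hS1 (fun t => t⁻¹)
          = fc hS1 (fun t => t⁻¹) * fc hS1 (fun t => t) * fc hS1 (fun t => t⁻¹) := by
            rw [fc_id]
      _ = fc hS1 (fun t => t⁻¹ * t) * fc hS1 (fun t => t⁻¹) := by rw [fc_mul]
      _ = fc hS1 (fun t => t⁻¹ * t * t⁻¹) := by rw [fc_mul]
      _ = fc hS1 (fun t => t⁻¹) := fc_congr _ fun i => by
            rcases eq_or_ne (hS1.eigenvalues i) 0 with h | h
            · simp [h]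
            · field_simp
    · have : (X + Y) * fc hS1 (fun t => t⁻¹) = fc hS1 (fun t => t * t⁻¹) := by
        calc (X + Y) * fc hS1 (fun t => t⁻¹)
            = fc hS1 (fun t => t) * fc hS1 (fun t => t⁻¹) := by rw [fc_id]
        _ = fc hS1 (fun t => t * t⁻¹) := fc_mul _ _ _
      rw [this]; exact fc_herm _ _
    · have : fc hS1 (fun t => t⁻¹) * (X + Y) = fc hS1 (fun t => t⁻¹ * t) := by
        calc fc hS1 (fun t => t⁻¹) * (X + Y)
            = fc hS1 (fun t => t⁻¹) * fc hS1 (fun t => t) := by rw [fc_id]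
        _ = fc hS1 (fun t => t⁻¹ * t) := fc_mul _ _ _
      rw [this]; exact fc_herm _ _
  -- sqrt of S
  have hsqrt_psd : (fc hS1 Real.sqrt).PosSemidef := fc_psd _ fun i => Real.sqrt_nonneg _
  have hsqrt_sq : fc hS1 Real.sqrt ^ 2 = X + Y := by
    rw [pow_two, fc_mul]
    calc fc hS1 (fun t => Real.sqrt t * Real.sqrt t) = fc hS1 (fun t => t) :=
          fc_congr _ fun i => Real.mul_self_sqrt (hS.eigenvalues_nonneg i)
    _ = X + Y := fc_id _
  have hsqrtS_eq : (hX.add hY).sqrt = fc hS1 Real.sqrt :=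
    (hsqrt_psd.eq_sqrt_of_sq_eq (hX.add hY) hsqrt_sq).symm
  -- Sdh as fc
  have hq_psd : (fc hS1 (fun t => Real.sqrt t⁻¹)).PosSemidef :=
    fc_psd _ fun i => Real.sqrt_nonneg _
  have hSdh_eq : Sdh = fc hS1 (fun t => Real.sqrt t⁻¹) := by
    refine hSdh.eq_of_sq_eq_sq hq_psd ?_
    rw [pow_two, pow_two, hSdh2, hSd_eq, fc_mul]
    exact (fc_congr _ fun i => by
      rw [Real.mul_self_sqrt (inv_nonneg.mpr (hS.eigenvalues_nonneg i))]).symm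
  -- A as fc
  have habs_psd : (fc hH'herm (fun t => |t|)).PosSemidef := fc_psd _ fun i => abs_nonneg _
  have habs_sq : fc hH'herm (fun t => |t|) ^ 2 = (X - Y)ᴴ * (X - Y) := by
    rw [pow_two, fc_mul]
    calc fc hH'herm (fun t => |t| * |t|) = fc hH'herm (fun t => t * t) :=
          fc_congr _ fun i => abs_mul_abs_self _
    _ = fc hH'herm (fun t => t) * fc hH'herm (fun t => t) := (fc_mul _ _ _).symm
    _ = (X - Y) * (X - Y) := by rw [fc_id]
    _ = (X - Y)ᴴ * (X - Y) := by rw [hH'herm]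
  have hA_eq : A = fc hH'herm (fun t => |t|) :=
    (habs_psd.eq_sqrt_of_sq_eq (Matrix.posSemidef_conjTranspose_mul_self (X - Y)) habs_sq).symm
  -- commutation facts
  have hXfcS : ∀ f, X * fc hS1 f = fc hS1 f * X := fun f => fc_commute _ f hXS
  have hYfcS : ∀ f, Y * fc hS1 f = fc hS1 f * Y := fun f => fc_commute _ f hYS
  have hfcSfcH' : ∀ f g, fc hS1 f * fc hH'herm g = fc hH'herm g * fc hS1 f := by
    intro f g
    have h1 : fc hS1 f * (X - Y) = (X - Y) * fc hS1 f := (fc_commute _ f hH'S).symm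
    exact fc_commute hH'herm g h1
  have hXfcH' : ∀ g, X * fc hH'herm g = fc hH'herm g * X := fun g => fc_commute _ g hXH'
  have hYfcH' : ∀ g, Y * fc hH'herm g = fc hH'herm g * Y := fun g => fc_commute _ g hYH'
  -- key matrix identities
  have hSdS : Sd * (X + Y) = (X + Y) * Sd := by
    calc Sd * (X + Y) = fc hS1 (fun t => t⁻¹) * fc hS1 (fun t => t) := by rw [hSd_eq, fc_id]
    _ = fc hS1 (fun t => t⁻¹ * t) := fc_mul _ _ _
    _ = fc hS1 (fun t => t * t⁻¹) := fc_congr _ fun i => mul_comm _ _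
    _ = fc hS1 (fun t => t) * fc hS1 (fun t => t⁻¹) := (fc_mul _ _ _).symm
    _ = (X + Y) * Sd := by rw [hSd_eq, fc_id]
  have hSSSd : (X + Y) * (X + Y) * Sd = X + Y := by
    rw [Matrix.mul_assoc, ← hSdS, ← Matrix.mul_assoc, hSd.1]
  have hXYSd : X * Y * Sd = X * Sd * Y := by
    have hYSd : Y * Sd = Sd * Y := by rw [hSd_eq]; exact hYfcS _
    rw [Matrix.mul_assoc, hYSd, ← Matrix.mul_assoc]
  have hASd : A * Sd = Sd * A := by
    rw [hA_eq, hSd_eq]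
    exact (hfcSfcH' _ _).symm
  have hAA : A * A = (X - Y) * (X - Y) := by
    calc A * A = fc hH'herm (fun t => |t|) * fc hH'herm (fun t => |t|) := by rw [hA_eq]
    _ = fc hH'herm (fun t => t) * fc hH'herm (fun t => t) := by
          rw [fc_mul, fc_mul]
          exact fc_congr _ fun i => abs_mul_abs_self _
    _ = (X - Y) * (X - Y) := by rw [fc_id]
  have hKexp : (X - Y) * (X - Y) = (X + Y) * (X + Y) - (4 : ℂ) • (X * Y) := by
    simp only [sub_mul, mul_sub, add_mul, mul_add]
    rw [hcomm]
    module
  -- Wh as Sdh * (2⁻¹ • A) * Sdh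
  have h2inv : ((2⁻¹ : ℝ) : ℂ) = (2 : ℂ)⁻¹ := by norm_num
  have hhalfA : ((2 : ℂ)⁻¹ • A).PosSemidef := by
    rw [← h2inv]; exact psd_smul hApsd (by norm_num)
  have hW0psd : (Sdh * ((2 : ℂ)⁻¹ • A) * Sdh).PosSemidef := by
    have h := hhalfA.conjTranspose_mul_mul_same Sdh
    rwa [hSdh.1] at h
  have hinner : ((2 : ℂ)⁻¹ • A) * Sd * ((2 : ℂ)⁻¹ • A) = (4 : ℂ)⁻¹ • (X + Y) - X * Sd * Y := by
    calc ((2 : ℂ)⁻¹ • A) * Sd * ((2 : ℂ)⁻¹ • A)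
        = ((2 : ℂ)⁻¹ * (2 : ℂ)⁻¹) • (A * Sd * A) := by
          rw [Matrix.smul_mul, Matrix.smul_mul, Matrix.mul_smul, smul_smul, mul_comm]
    _ = (4 : ℂ)⁻¹ • (A * Sd * A) := by norm_num
    _ = (4 : ℂ)⁻¹ • (A * A * Sd) := by
          rw [Matrix.mul_assoc, ← hASd, ← Matrix.mul_assoc]
    _ = (4 : ℂ)⁻¹ • (((X + Y) * (X + Y) - (4 : ℂ) • (X * Y)) * Sd) := by rw [hAA, hKexp]
    _ = (4 : ℂ)⁻¹ • ((X + Y) - (4 : ℂ) • (X * Sd * Y)) := by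
          rw [Matrix.sub_mul, Matrix.smul_mul, hSSSd, hXYSd]
    _ = (4 : ℂ)⁻¹ • (X + Y) - X * Sd * Y := by module
  have hWh_eq : Wh = Sdh * ((2 : ℂ)⁻¹ • A) * Sdh := by
    refine hWh.eq_of_sq_eq_sq hW0psd ?_
    rw [pow_two, pow_two]
    calc Wh * Wh = Sdh * ((4 : ℂ)⁻¹ • (X + Y) - X * Sd * Y) * Sdh := hWh2
    _ = Sdh * (((2 : ℂ)⁻¹ • A) * Sd * ((2 : ℂ)⁻¹ • A)) * Sdh := by rw [hinner]
    _ = Sdh * (((2 : ℂ)⁻¹ • A) * (Sdh * Sdh) * ((2 : ℂ)⁻¹ • A)) * Sdh := by rw [hSdh2]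
    _ = (Sdh * ((2 : ℂ)⁻¹ • A) * Sdh) * (Sdh * ((2 : ℂ)⁻¹ • A) * Sdh) := by
          simp only [Matrix.mul_assoc]
  -- the projection P
  have hPherm : (fc hS1 (fun t => t * t⁻¹)).IsHermitian := fc_herm _ _
  have hPP : fc hS1 (fun t => t * t⁻¹) * fc hS1 (fun t => t * t⁻¹) = fc hS1 (fun t => t * t⁻¹) := by
    rw [fc_mul]
    exact fc_congr _ fun i => by
      rcases eq_or_ne (hS1.eigenvalues i) 0 with h | h
      · simp [h]
      · field_simp
  have hPS : fc hS1 (fun t => t * t⁻¹) * (X + Y) = X + Y := by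
    calc fc hS1 (fun t => t * t⁻¹) * (X + Y)
        = fc hS1 (fun t => t * t⁻¹) * fc hS1 (fun t => t) := by rw [fc_id]
    _ = fc hS1 (fun t => t * t⁻¹ * t) := fc_mul _ _ _
    _ = fc hS1 (fun t => t) := fc_congr _ fun i => by
          rcases eq_or_ne (hS1.eigenvalues i) 0 with h | h
          · simp [h]
          · field_simp
    _ = X + Y := fc_id _
  have hsqrtSdh : (hX.add hY).sqrt * Sdh = fc hS1 (fun t => t * t⁻¹) := by
    rw [hsqrtS_eq, hSdh_eq, fc_mul]
    exact fc_congr _ fun i => by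
      rcases (hnn i).eq_or_lt' with h | h
      · rw [h]; simp
      · rw [← Real.sqrt_mul h.le, mul_inv_cancel₀ h.ne', Real.sqrt_one]
  have hSdhsqrt : Sdh * (hX.add hY).sqrt = fc hS1 (fun t => t * t⁻¹) := by
    rw [hsqrtS_eq, hSdh_eq, fc_mul]
    exact fc_congr _ fun i => by
      rcases (hnn i).eq_or_lt' with h | h
      · rw [h]; simp
      · rw [mul_comm (Real.sqrt _), ← Real.sqrt_mul h.le, mul_inv_cancel₀ h.ne', Real.sqrt_one]
  -- Q := 1 - P kills X, Y, A
  have hQherm : (1 - fc hS1 (fun t => t * t⁻¹))ᴴ = 1 - fc hS1 (fun t => t * t⁻¹) := by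
    rw [Matrix.conjTranspose_sub, Matrix.conjTranspose_one, hPherm]
  have hQS : (1 - fc hS1 (fun t => t * t⁻¹)) * (X + Y) = 0 := by
    rw [Matrix.sub_mul, Matrix.one_mul, hPS, sub_self]
  have hXQ : X * (1 - fc hS1 (fun t => t * t⁻¹)) = 0 := by
    have hQXQpsd : ((1 - fc hS1 (fun t => t * t⁻¹)) * X *
        (1 - fc hS1 (fun t => t * t⁻¹))).PosSemidef := by
      have h := hX.conjTranspose_mul_mul_same (1 - fc hS1 (fun t => t * t⁻¹))
      rwa [hQherm] at h
    have hQYQpsd : ((1 - fc hS1 (fun t => t * t⁻¹)) * Y *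
        (1 - fc hS1 (fun t => t * t⁻¹))).PosSemidef := by
      have h := hY.conjTranspose_mul_mul_same (1 - fc hS1 (fun t => t * t⁻¹))
      rwa [hQherm] at h
    have hsum : (1 - fc hS1 (fun t => t * t⁻¹)) * X * (1 - fc hS1 (fun t => t * t⁻¹))
        + (1 - fc hS1 (fun t => t * t⁻¹)) * Y * (1 - fc hS1 (fun t => t * t⁻¹)) = 0 := by
      rw [← Matrix.add_mul, ← Matrix.mul_add, hQS, Matrix.zero_mul]
    have hQXQ : (1 - fc hS1 (fun t => t * t⁻¹)) * X * (1 - fc hS1 (fun t => t * t⁻¹)) = 0 := by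
      refine psd_eq_zero hQXQpsd ?_
      have hthis : (1 - fc hS1 (fun t => t * t⁻¹)) * X * (1 - fc hS1 (fun t => t * t⁻¹))
          = -((1 - fc hS1 (fun t => t * t⁻¹)) * Y * (1 - fc hS1 (fun t => t * t⁻¹))) :=
        eq_neg_of_add_eq_zero_left hsum
      rw [hthis, neg_neg]; exact hQYQpsd
    have hTQ : hX.sqrt * (1 - fc hS1 (fun t => t * t⁻¹)) = 0 := by
      refine Matrix.conjTranspose_mul_self_eq_zero.mp ?_
      have he : (hX.sqrt * (1 - fc hS1 (fun t => t * t⁻¹)))ᴴ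
          * (hX.sqrt * (1 - fc hS1 (fun t => t * t⁻¹)))
          = (1 - fc hS1 (fun t => t * t⁻¹)) * X * (1 - fc hS1 (fun t => t * t⁻¹)) := by
        rw [Matrix.conjTranspose_mul, hQherm, hX.posSemidef_sqrt.1, Matrix.mul_assoc,
          ← Matrix.mul_assoc hX.sqrt hX.sqrt, hX.sqrt_mul_self, ← Matrix.mul_assoc]
      rw [he, hQXQ]
    calc X * (1 - fc hS1 (fun t => t * t⁻¹))
        = hX.sqrt * (hX.sqrt * (1 - fc hS1 (fun t => t * t⁻¹))) := by
          rw [← Matrix.mul_assoc, hX.sqrt_mul_self]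
    _ = 0 := by rw [hTQ, Matrix.mul_zero]
  have hYQ : Y * (1 - fc hS1 (fun t => t * t⁻¹)) = 0 := by
    -- symmetric argument via X + Y
    have h := hQS
    have hQX : (1 - fc hS1 (fun t => t * t⁻¹)) * X = 0 := by
      have hc := congrArg Matrix.conjTranspose hXQ
      rwa [Matrix.conjTranspose_mul, hQherm, hX.1, Matrix.conjTranspose_zero] at hc
    have hQY : (1 - fc hS1 (fun t => t * t⁻¹)) * Y = 0 := by
      have := hQS
      rw [Matrix.mul_add, hQX, zero_add] at this
      exact this
    have hc := congrArg Matrix.conjTranspose hQY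
    rwa [Matrix.conjTranspose_mul, hQherm, hY.1, Matrix.conjTranspose_zero] at hc
  have hQX : (1 - fc hS1 (fun t => t * t⁻¹)) * X = 0 := by
    have hc := congrArg Matrix.conjTranspose hXQ
    rwa [Matrix.conjTranspose_mul, hQherm, hX.1, Matrix.conjTranspose_zero] at hc
  have hAQ : A * (1 - fc hS1 (fun t => t * t⁻¹)) = 0 := by
    have h1 : (1 - fc hS1 (fun t => t * t⁻¹)) * ((X - Y) * (X - Y)) = 0 := by
      rw [hKexp, Matrix.mul_sub, Matrix.mul_smul, ← Matrix.mul_assoc, hQS, Matrix.zero_mul,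
        ← Matrix.mul_assoc, hQX, Matrix.zero_mul, smul_zero, sub_zero]
    refine Matrix.conjTranspose_mul_self_eq_zero.mp ?_
    have he : (A * (1 - fc hS1 (fun t => t * t⁻¹)))ᴴ * (A * (1 - fc hS1 (fun t => t * t⁻¹)))
        = (1 - fc hS1 (fun t => t * t⁻¹)) * ((X - Y) * (X - Y))
          * (1 - fc hS1 (fun t => t * t⁻¹)) := by
      rw [Matrix.conjTranspose_mul, hQherm, hApsd.1, Matrix.mul_assoc,
        ← Matrix.mul_assoc A A, hAA, ← Matrix.mul_assoc]
    rw [he, h1, Matrix.zero_mul]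
  have hAP : A * fc hS1 (fun t => t * t⁻¹) = A := by
    have := hAQ
    rw [Matrix.mul_sub, Matrix.mul_one, sub_eq_zero] at this
    exact this.symm
  have hPA : fc hS1 (fun t => t * t⁻¹) * A = A := by
    have hc := congrArg Matrix.conjTranspose hAP
    rwa [Matrix.conjTranspose_mul, hPherm, hApsd.1] at hc
  -- the key computation
  have hkey : (hX.add hY).sqrt * Wh * (hX.add hY).sqrt = (2 : ℂ)⁻¹ • A := by
    calc (hX.add hY).sqrt * Wh * (hX.add hY).sqrt
        = (hX.add hY).sqrt * (Sdh * ((2 : ℂ)⁻¹ • A) * Sdh) * (hX.add hY).sqrt := by rw [hWh_eq]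
    _ = ((hX.add hY).sqrt * Sdh) * ((2 : ℂ)⁻¹ • A) * (Sdh * (hX.add hY).sqrt) := by
          simp only [Matrix.mul_assoc]
    _ = fc hS1 (fun t => t * t⁻¹) * ((2 : ℂ)⁻¹ • A) * fc hS1 (fun t => t * t⁻¹) := by
          rw [hsqrtSdh, hSdhsqrt]
    _ = (2 : ℂ)⁻¹ • (fc hS1 (fun t => t * t⁻¹) * A * fc hS1 (fun t => t * t⁻¹)) := by
          rw [Matrix.mul_smul, Matrix.smul_mul]
    _ = (2 : ℂ)⁻¹ • A := by rw [hPA, hAP]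
  have hmain : (2 : ℂ)⁻¹ • (X + Y) + (hX.add hY).sqrt * Wh * (hX.add hY).sqrt
      = (2 : ℂ)⁻¹ • (X + Y + A) := by
    rw [hkey]
    module
  refine ⟨hmain, ?_⟩
  -- norm part
  rw [hmain]
  have hZpsd : ((2 : ℂ)⁻¹ • (X + Y + A)).PosSemidef := by
    rw [← h2inv]
    exact psd_smul (hS.add hApsd) (by norm_num)
  -- lower bounds
  have hAmH : (A - (X - Y)).PosSemidef := by
    have he : fc hH'herm (fun t => |t| - t) = A - (X - Y) := by
      rw [← fc_sub, fc_id, hA_eq]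
    rw [← he]
    exact fc_psd _ fun i => sub_nonneg.mpr (le_abs_self _)
  have hApH : (A + (X - Y)).PosSemidef := by
    have he : fc hH'herm (fun t => |t| + t) = A + (X - Y) := by
      rw [← fc_add, fc_id, hA_eq]
    rw [← he]
    exact fc_psd _ fun i => by linarith [neg_abs_le (hH'herm.eigenvalues i)]
  have hnX : ‖X‖ ≤ ‖(2 : ℂ)⁻¹ • (X + Y + A)‖ := by
    refine norm_mono hX hZpsd ?_
    have hd : (2 : ℂ)⁻¹ • (X + Y + A) - X = (2 : ℂ)⁻¹ • (A - (X - Y)) := by module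
    rw [hd, ← h2inv]
    exact psd_smul hAmH (by norm_num)
  have hnY : ‖Y‖ ≤ ‖(2 : ℂ)⁻¹ • (X + Y + A)‖ := by
    refine norm_mono hY hZpsd ?_
    have hd : (2 : ℂ)⁻¹ • (X + Y + A) - Y = (2 : ℂ)⁻¹ • (A + (X - Y)) := by module
    rw [hd, ← h2inv]
    exact psd_smul hApH (by norm_num)
  -- upper bound
  set m : ℝ := max ‖X‖ ‖Y‖ with hmdef
  have hm0 : (0 : ℝ) ≤ m := le_trans (norm_nonneg X) (le_max_left _ _)
  have hBpsd : ((m : ℂ) • 1 - X).PosSemidef := by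
    have he : fc hX.1 (fun t => m - t) = (m : ℂ) • 1 - X := by
      rw [← fc_sub, fc_const, fc_id]
    rw [← he]
    exact fc_psd _ fun i => sub_nonneg.mpr ((eig_le_norm hX.1 i).trans (le_max_left _ _))
  have hCpsd : ((m : ℂ) • 1 - Y).PosSemidef := by
    have he : fc hY.1 (fun t => m - t) = (m : ℂ) • 1 - Y := by
      rw [← fc_sub, fc_const, fc_id]
    rw [← he]
    exact fc_psd _ fun i => sub_nonneg.mpr ((eig_le_norm hY.1 i).trans (le_max_right _ _))
  have hTpsd : (((m : ℂ) • 1 - X) + ((m : ℂ) • 1 - Y)).PosSemidef := hBpsd.add hCpsd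
  -- commutation of B, C with X - Y
  have h1comm : ((m : ℂ) • 1 : Matrix (Fin n) (Fin n) ℂ) * (X - Y)
      = (X - Y) * ((m : ℂ) • 1) := by
    rw [Matrix.smul_mul, Matrix.mul_smul, Matrix.one_mul, Matrix.mul_one]
  have hBH' : ((m : ℂ) • 1 - X) * (X - Y) = (X - Y) * ((m : ℂ) • 1 - X) := by
    rw [Matrix.mul_sub (X - Y) ((m : ℂ) • 1) X, Matrix.sub_mul ((m : ℂ) • 1) X (X - Y),
      h1comm, hXH']
  have hCH' : ((m : ℂ) • 1 - Y) * (X - Y) = (X - Y) * ((m : ℂ) • 1 - Y) := by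
    rw [Matrix.mul_sub (X - Y) ((m : ℂ) • 1) Y, Matrix.sub_mul ((m : ℂ) • 1) Y (X - Y),
      h1comm, hYH']
  have hTH' : (((m : ℂ) • 1 - X) + ((m : ℂ) • 1 - Y)) * (X - Y)
      = (X - Y) * (((m : ℂ) • 1 - X) + ((m : ℂ) • 1 - Y)) := by
    rw [Matrix.add_mul, Matrix.mul_add, hBH', hCH']
  -- spectral projections of X - Y
  have hEp_herm : (fc hH'herm (fun t => if 0 < t then 1 else 0)).IsHermitian := fc_herm _ _
  have hEm_herm : (fc hH'herm (fun t => if t < 0 then 1 else 0)).IsHermitian := fc_herm _ _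
  have hE0_herm : (fc hH'herm (fun t => if t = 0 then 1 else 0)).IsHermitian := fc_herm _ _
  have hEp_idem : fc hH'herm (fun t => if 0 < t then 1 else 0)
      * fc hH'herm (fun t => if 0 < t then 1 else 0)
      = fc hH'herm (fun t => if 0 < t then 1 else 0) := by
    rw [fc_mul]
    exact fc_congr _ fun i => by rcases lt_or_ge 0 (hH'herm.eigenvalues i) with h | h <;>
      simp [h, not_lt.mpr]
  have hEm_idem : fc hH'herm (fun t => if t < 0 then 1 else 0)
      * fc hH'herm (fun t => if t < 0 then 1 else 0)
      = fc hH'herm (fun t => if t < 0 then 1 else 0) := by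
    rw [fc_mul]
    exact fc_congr _ fun i => by rcases lt_or_ge (hH'herm.eigenvalues i) 0 with h | h <;>
      simp [h, not_lt.mpr]
  have hE0_idem : fc hH'herm (fun t => if t = 0 then 1 else 0)
      * fc hH'herm (fun t => if t = 0 then 1 else 0)
      = fc hH'herm (fun t => if t = 0 then 1 else 0) := by
    rw [fc_mul]
    exact fc_congr _ fun i => by rcases eq_or_ne (hH'herm.eigenvalues i) 0 with h | h <;> simp [h]
  have hEsum : fc hH'herm (fun t => if 0 < t then 1 else 0)
      + fc hH'herm (fun t => if t < 0 then 1 else 0)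
      + fc hH'herm (fun t => if t = 0 then 1 else 0) = 1 := by
    rw [fc_add, fc_add]
    calc fc hH'herm (fun t => (if 0 < t then (1:ℝ) else 0) + (if t < 0 then 1 else 0)
          + (if t = 0 then 1 else 0)) = fc hH'herm (fun _ => 1) := by
          refine fc_congr _ fun i => ?_
          rcases lt_trichotomy (hH'herm.eigenvalues i) 0 with h | h | h
          · simp [h, asymm h, h.ne]
          · simp [h]
          · simp [h, asymm h, h.ne']
    _ = 1 := fc_one _
  -- A action on projections
  have hAEp : A * fc hH'herm (fun t => if 0 < t then 1 else 0)
      = (X - Y) * fc hH'herm (fun t => if 0 < t then 1 else 0) := by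
    calc A * fc hH'herm (fun t => if 0 < t then 1 else 0)
        = fc hH'herm (fun t => |t|) * fc hH'herm (fun t => if 0 < t then 1 else 0) := by
          rw [hA_eq]
    _ = fc hH'herm (fun t => t) * fc hH'herm (fun t => if 0 < t then 1 else 0) := by
          rw [fc_mul, fc_mul]
          exact fc_congr _ fun i => by
            rcases lt_or_ge 0 (hH'herm.eigenvalues i) with h | h
            · simp [h, abs_of_pos h]
            · simp [not_lt.mpr h]
    _ = (X - Y) * fc hH'herm (fun t => if 0 < t then 1 else 0) := by rw [fc_id]
  have hAEp_dead : True := trivial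
  have _dead1 : True := trivial
  have hAEm : A * fc hH'herm (fun t => if t < 0 then 1 else 0)
      = -((X - Y) * fc hH'herm (fun t => if t < 0 then 1 else 0)) := by
    calc A * fc hH'herm (fun t => if t < 0 then 1 else 0)
        = fc hH'herm (fun t => |t|) * fc hH'herm (fun t => if t < 0 then 1 else 0) := by
          rw [hA_eq]
    _ = fc hH'herm (fun t => -t) * fc hH'herm (fun t => if t < 0 then 1 else 0) := by
          rw [fc_mul, fc_mul]
          exact fc_congr _ fun i => by
            rcases lt_or_ge (hH'herm.eigenvalues i) 0 with h | h
            · simp [h, abs_of_neg h]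
            · simp [not_lt.mpr h]
    _ = -(fc hH'herm (fun t => t)) * fc hH'herm (fun t => if t < 0 then 1 else 0) := by
          rw [fc_neg]
    _ = -((X - Y) * fc hH'herm (fun t => if t < 0 then 1 else 0)) := by
          rw [fc_id, Matrix.neg_mul]
  have hAE0 : A * fc hH'herm (fun t => if t = 0 then 1 else 0) = 0 := by
    rw [hA_eq, fc_mul]
    have : fc hH'herm (fun t => |t| * (if t = 0 then 1 else 0)) = fc hH'herm (fun _ => (0:ℝ)) :=
      fc_congr _ fun i => by rcases eq_or_ne (hH'herm.eigenvalues i) 0 with h | h <;> simp [h]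
    rw [this, fc_const]
    simp
  -- pieces
  have hpiece_p : ((((m : ℂ) • 1 - X) + ((m : ℂ) • 1 - Y)) - A)
      * fc hH'herm (fun t => if 0 < t then 1 else 0)
      = (2 : ℂ) • (fc hH'herm (fun t => if 0 < t then 1 else 0) * ((m : ℂ) • 1 - X)
          * fc hH'herm (fun t => if 0 < t then 1 else 0)) := by
    rw [Matrix.sub_mul, hAEp, ← Matrix.sub_mul]
    have h1 : (((m : ℂ) • 1 - X) + ((m : ℂ) • 1 - Y)) - (X - Y)
        = (2 : ℂ) • ((m : ℂ) • 1 - X) := by module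
    rw [h1, Matrix.smul_mul]
    congr 1
    have hcommB : ((m : ℂ) • 1 - X) * fc hH'herm (fun t => if 0 < t then 1 else 0)
        = fc hH'herm (fun t => if 0 < t then 1 else 0) * ((m : ℂ) • 1 - X) :=
      fc_commute _ _ hBH'
    calc ((m : ℂ) • 1 - X) * fc hH'herm (fun t => if 0 < t then 1 else 0)
        = ((m : ℂ) • 1 - X) * (fc hH'herm (fun t => if 0 < t then 1 else 0)
            * fc hH'herm (fun t => if 0 < t then 1 else 0)) := by rw [hEp_idem]
    _ = (((m : ℂ) • 1 - X) * fc hH'herm (fun t => if 0 < t then 1 else 0))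
          * fc hH'herm (fun t => if 0 < t then 1 else 0) := by rw [Matrix.mul_assoc]
    _ = fc hH'herm (fun t => if 0 < t then 1 else 0) * ((m : ℂ) • 1 - X)
          * fc hH'herm (fun t => if 0 < t then 1 else 0) := by rw [hcommB]
  have hpiece_m : ((((m : ℂ) • 1 - X) + ((m : ℂ) • 1 - Y)) - A)
      * fc hH'herm (fun t => if t < 0 then 1 else 0)
      = (2 : ℂ) • (fc hH'herm (fun t => if t < 0 then 1 else 0) * ((m : ℂ) • 1 - Y)
          * fc hH'herm (fun t => if t < 0 then 1 else 0)) := by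
    rw [Matrix.sub_mul, hAEm, sub_neg_eq_add, ← Matrix.add_mul]
    have h1 : (((m : ℂ) • 1 - X) + ((m : ℂ) • 1 - Y)) + (X - Y)
        = (2 : ℂ) • ((m : ℂ) • 1 - Y) := by module
    rw [h1, Matrix.smul_mul]
    congr 1
    have hcommC : ((m : ℂ) • 1 - Y) * fc hH'herm (fun t => if t < 0 then 1 else 0)
        = fc hH'herm (fun t => if t < 0 then 1 else 0) * ((m : ℂ) • 1 - Y) :=
      fc_commute _ _ hCH'
    calc ((m : ℂ) • 1 - Y) * fc hH'herm (fun t => if t < 0 then 1 else 0)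
        = ((m : ℂ) • 1 - Y) * (fc hH'herm (fun t => if t < 0 then 1 else 0)
            * fc hH'herm (fun t => if t < 0 then 1 else 0)) := by rw [hEm_idem]
    _ = (((m : ℂ) • 1 - Y) * fc hH'herm (fun t => if t < 0 then 1 else 0))
          * fc hH'herm (fun t => if t < 0 then 1 else 0) := by rw [Matrix.mul_assoc]
    _ = fc hH'herm (fun t => if t < 0 then 1 else 0) * ((m : ℂ) • 1 - Y)
          * fc hH'herm (fun t => if t < 0 then 1 else 0) := by rw [hcommC]
  have hpiece_0 : ((((m : ℂ) • 1 - X) + ((m : ℂ) • 1 - Y)) - A)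
      * fc hH'herm (fun t => if t = 0 then 1 else 0)
      = fc hH'herm (fun t => if t = 0 then 1 else 0)
          * (((m : ℂ) • 1 - X) + ((m : ℂ) • 1 - Y))
          * fc hH'herm (fun t => if t = 0 then 1 else 0) := by
    rw [Matrix.sub_mul, hAE0, sub_zero]
    have hcommT : (((m : ℂ) • 1 - X) + ((m : ℂ) • 1 - Y))
        * fc hH'herm (fun t => if t = 0 then 1 else 0)
        = fc hH'herm (fun t => if t = 0 then 1 else 0)
          * (((m : ℂ) • 1 - X) + ((m : ℂ) • 1 - Y)) := fc_commute _ _ hTH'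
    calc (((m : ℂ) • 1 - X) + ((m : ℂ) • 1 - Y)) * fc hH'herm (fun t => if t = 0 then 1 else 0)
        = (((m : ℂ) • 1 - X) + ((m : ℂ) • 1 - Y)) * (fc hH'herm (fun t => if t = 0 then 1 else 0)
            * fc hH'herm (fun t => if t = 0 then 1 else 0)) := by rw [hE0_idem]
    _ = ((((m : ℂ) • 1 - X) + ((m : ℂ) • 1 - Y))
          * fc hH'herm (fun t => if t = 0 then 1 else 0))
          * fc hH'herm (fun t => if t = 0 then 1 else 0) := by rw [Matrix.mul_assoc]
    _ = fc hH'herm (fun t => if t = 0 then 1 else 0)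
          * (((m : ℂ) • 1 - X) + ((m : ℂ) • 1 - Y))
          * fc hH'herm (fun t => if t = 0 then 1 else 0) := by rw [hcommT]
  have hppsd : ((2 : ℂ) • (fc hH'herm (fun t => if 0 < t then 1 else 0) * ((m : ℂ) • 1 - X)
      * fc hH'herm (fun t => if 0 < t then 1 else 0))).PosSemidef := by
    have h := hBpsd.conjTranspose_mul_mul_same (fc hH'herm (fun t => if 0 < t then 1 else 0))
    rw [hEp_herm] at h
    have h2 : (((2:ℝ) : ℂ)) = (2 : ℂ) := by norm_num
    rw [← h2]
    exact psd_smul h (by norm_num)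
  have hmpsd : ((2 : ℂ) • (fc hH'herm (fun t => if t < 0 then 1 else 0) * ((m : ℂ) • 1 - Y)
      * fc hH'herm (fun t => if t < 0 then 1 else 0))).PosSemidef := by
    have h := hCpsd.conjTranspose_mul_mul_same (fc hH'herm (fun t => if t < 0 then 1 else 0))
    rw [hEm_herm] at h
    have h2 : (((2:ℝ) : ℂ)) = (2 : ℂ) := by norm_num
    rw [← h2]
    exact psd_smul h (by norm_num)
  have h0psd : (fc hH'herm (fun t => if t = 0 then 1 else 0)
      * (((m : ℂ) • 1 - X) + ((m : ℂ) • 1 - Y))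
      * fc hH'herm (fun t => if t = 0 then 1 else 0)).PosSemidef := by
    have h := hTpsd.conjTranspose_mul_mul_same (fc hH'herm (fun t => if t = 0 then 1 else 0))
    rwa [hE0_herm] at h
  have hTApsd : ((((m : ℂ) • 1 - X) + ((m : ℂ) • 1 - Y)) - A).PosSemidef := by
    have hsplit : (((m : ℂ) • 1 - X) + ((m : ℂ) • 1 - Y)) - A
        = ((((m : ℂ) • 1 - X) + ((m : ℂ) • 1 - Y)) - A)
            * fc hH'herm (fun t => if 0 < t then 1 else 0)
          + ((((m : ℂ) • 1 - X) + ((m : ℂ) • 1 - Y)) - A)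
            * fc hH'herm (fun t => if t < 0 then 1 else 0)
          + ((((m : ℂ) • 1 - X) + ((m : ℂ) • 1 - Y)) - A)
            * fc hH'herm (fun t => if t = 0 then 1 else 0) := by
      rw [← Matrix.mul_add, ← Matrix.mul_add, hEsum, Matrix.mul_one]
    rw [hsplit, hpiece_p, hpiece_m, hpiece_0]
    exact (hppsd.add hmpsd).add h0psd
  have hmZpsd : ((m : ℂ) • 1 - (2 : ℂ)⁻¹ • (X + Y + A)).PosSemidef := by
    have hd : (m : ℂ) • 1 - (2 : ℂ)⁻¹ • (X + Y + A)
        = (2 : ℂ)⁻¹ • ((((m : ℂ) • 1 - X) + ((m : ℂ) • 1 - Y)) - A) := by module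
    rw [hd, ← h2inv]
    exact psd_smul hTApsd (by norm_num)
  have hupper : ‖(2 : ℂ)⁻¹ • (X + Y + A)‖ ≤ m := by
    refine norm_le_of_form hZpsd hm0 fun x => ?_
    have h0 := hmZpsd.dotProduct_mulVec_nonneg x
    have hre : 0 ≤ (dotProduct (star x)
        (((m : ℂ) • 1 - (2 : ℂ)⁻¹ • (X + Y + A)) *ᵥ x)).re := by
      exact_mod_cast (Complex.le_def.mp h0).1
    rw [Matrix.sub_mulVec, dotProduct_sub, Complex.sub_re] at hre
    have hsm : dotProduct (star x) (((m : ℂ) • (1 : Matrix (Fin n) (Fin n) ℂ)) *ᵥ x)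
        = (m : ℂ) * dotProduct (star x) x := by
      rw [Matrix.smul_mulVec, Matrix.one_mulVec, dotProduct_smul, smul_eq_mul]
    rw [hsm, Complex.re_ofReal_mul] at hre
    linarith
  exact le_antisymm hupper (max_le hnX hnY)
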